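/- The homomorphism density of any fixed finite graph H is Lipschitz-continuous (in particular continuous) with respect to the cut metric on graphons: |t_H(f) − t_H(g)| ≤ |E(H)| · d(f,g). -/

import Mathlib

open MeasureTheory Real Set

noncomputable section

def I01 : Set ℝ := Set.Icc 0 1

def IsGraphon (g : ℝ → ℝ → ℝ) : Prop :=
  Measurable (Function.uncurry g) ∧ (∀ x y, g x y = g y x) ∧ ∀ x y, g x y ∈ Set.Icc (0:ℝ) 1

def cutDist (f g : ℝ → ℝ → ℝ) : ℝ :=
  sSup {r : ℝ | ∃ S T : Set ℝ, MeasurableSet S ∧ MeasurableSet T ∧ S ⊆ I01 ∧ T ⊆ I01 ∧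
    r = |∫ x in S, ∫ y in T, (f x y - g x y)|}

/-- The set of edges of `H`, each represented once as an ordered pair `(i,j)` with `i < j`. -/
def edgePairs {n : ℕ} (H : SimpleGraph (Fin n)) [DecidableRel H.Adj] : Finset (Fin n × Fin n) :=
  Finset.univ.filter fun p => p.1 < p.2 ∧ H.Adj p.1 p.2

/-- The homomorphism density of `H` in the graphon `g`:
`t_H(g) = ∫_{[0,1]^{V(H)}} ∏_{{i,j}∈E(H)} g(x_i,x_j) dx`. -/
def homDensity {n : ℕ} (H : SimpleGraph (Fin n)) [DecidableRel H.Adj] (g : ℝ → ℝ → ℝ) : ℝ :=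
  ∫ x in Set.univ.pi (fun _ : Fin n => I01), ∏ p ∈ edgePairs H, g (x p.1) (x p.2)

lemma measurableSet_I01 : MeasurableSet I01 := measurableSet_Icc

def mu01 : Measure ℝ := volume.restrict I01

instance : IsProbabilityMeasure mu01 := by
  constructor; simp [mu01, I01, Measure.restrict_apply, Real.volume_Icc]

/-- telescoping identity for products, relative to an injective key function -/
lemma prod_sub_prod_telescope {ι κ : Type*} [LinearOrder κ] [DecidableEq ι] (e : ι → κ)
    (he : Function.Injective e) (s : Finset ι) (F G : ι → ℝ) :
    (∏ i ∈ s, F i) - (∏ i ∈ s, G i) =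
      ∑ i ∈ s, (∏ j ∈ s.filter (fun j => e j < e i), F j) * (F i - G i) *
        (∏ j ∈ s.filter (fun j => e i < e j), G j) := by
  induction s using Finset.induction_on_min_value e with
  | empty => simp
  | insert a s hnotmem hle ih =>
    have ha : ∀ x ∈ s, e a < e x := by
      intro x hx
      refine lt_of_le_of_ne (hle x hx) fun hc => ?_
      exact hnotmem (he hc ▸ hx)
    rw [Finset.prod_insert hnotmem, Finset.prod_insert hnotmem, Finset.sum_insert hnotmem]
    have h1 : (insert a s).filter (fun j => e j < e a) = ∅ := by
      apply Finset.filter_false_of_mem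
      intro x hx
      rcases Finset.mem_insert.1 hx with h | h
      · simp [h]
      · exact not_lt.2 (ha x h).le
    have h2 : (insert a s).filter (fun j => e a < e j) = s := by
      apply Finset.ext
      intro x
      simp only [Finset.mem_filter, Finset.mem_insert]
      constructor
      · rintro ⟨h | h, hlt⟩
        · exact absurd hlt (by simp [h])
        · exact h
      · intro hx; exact ⟨Or.inr hx, ha x hx⟩
    have key : ∀ i ∈ s, (∏ j ∈ (insert a s).filter (fun j => e j < e i), F j) * (F i - G i) *
        (∏ j ∈ (insert a s).filter (fun j => e i < e j), G j)
        = F a * ((∏ j ∈ s.filter (fun j => e j < e i), F j) * (F i - G i) *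
          (∏ j ∈ s.filter (fun j => e i < e j), G j)) := by
      intro i hi
      have hfa : (insert a s).filter (fun j => e j < e i) =
          insert a (s.filter (fun j => e j < e i)) := by
        rw [Finset.filter_insert, if_pos (ha i hi)]
      have hga : (insert a s).filter (fun j => e i < e j) = s.filter (fun j => e i < e j) := by
        rw [Finset.filter_insert, if_neg (not_lt.2 (ha i hi).le)]
      rw [hfa, hga, Finset.prod_insert (fun h => hnotmem (Finset.mem_of_mem_filter a h))]
      ring
    rw [Finset.sum_congr rfl key, h1, h2, ← Finset.mul_sum, ← ih]
    simp; ring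

def cutSet (f g : ℝ → ℝ → ℝ) : Set ℝ :=
  {r : ℝ | ∃ S T : Set ℝ, MeasurableSet S ∧ MeasurableSet T ∧ S ⊆ I01 ∧ T ⊆ I01 ∧
    r = |∫ x in S, ∫ y in T, (f x y - g x y)|}

lemma cutDist_eq (f g : ℝ → ℝ → ℝ) : cutDist f g = sSup (cutSet f g) := rfl

lemma zero_mem_cutSet (f g : ℝ → ℝ → ℝ) : (0:ℝ) ∈ cutSet f g :=
  ⟨∅, ∅, MeasurableSet.empty, MeasurableSet.empty, empty_subset _, empty_subset _, by simp⟩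

lemma cutSet_bddAbove {f g : ℝ → ℝ → ℝ} (hf : IsGraphon f) (hg : IsGraphon g) :
    BddAbove (cutSet f g) := by
  refine ⟨1, ?_⟩
  rintro r ⟨S, T, hS, hT, hSsub, hTsub, rfl⟩
  have hST : ∀ x y : ℝ, |f x y - g x y| ≤ 1 := by
    intro x y
    have h1 := hf.2.2 x y
    have h2 := hg.2.2 x y
    rw [abs_le]
    constructor <;> simp at h1 h2 <;> linarith
  have hT1 : (volume T) ≤ 1 := by
    calc volume T ≤ volume I01 := measure_mono hTsub
    _ = 1 := by simp [I01, Real.volume_Icc]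
  have hS1 : (volume S) ≤ 1 := by
    calc volume S ≤ volume I01 := measure_mono hSsub
    _ = 1 := by simp [I01, Real.volume_Icc]
  have hTfin : IsFiniteMeasure (volume.restrict T) :=
    ⟨by rw [Measure.restrict_apply_univ]; exact lt_of_le_of_lt hT1 (by norm_num)⟩
  have hSfin : IsFiniteMeasure (volume.restrict S) :=
    ⟨by rw [Measure.restrict_apply_univ]; exact lt_of_le_of_lt hS1 (by norm_num)⟩
  have inner_bd : ∀ x : ℝ, |∫ y in T, (f x y - g x y)| ≤ 1 := by
    intro x
    have := @norm_integral_le_of_norm_le_const ℝ ℝ _ _ _ (volume.restrict T) hTfin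
      (fun y => f x y - g x y) 1 (Filter.Eventually.of_forall fun y => by
        rw [Real.norm_eq_abs]; exact hST x y)
    rw [Real.norm_eq_abs] at this
    refine this.trans ?_
    rw [Measure.real, Measure.restrict_apply_univ]
    nlinarith [ENNReal.toReal_le_of_le_ofReal (by norm_num : (0:ℝ) ≤ 1) (by simpa using hT1)]
  have := @norm_integral_le_of_norm_le_const ℝ ℝ _ _ _ (volume.restrict S) hSfin
    (fun x => ∫ y in T, (f x y - g x y)) 1 (Filter.Eventually.of_forall fun x => by
      rw [Real.norm_eq_abs]; exact inner_bd x)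
  rw [Real.norm_eq_abs] at this
  refine this.trans ?_
  rw [Measure.real, Measure.restrict_apply_univ]
  nlinarith [ENNReal.toReal_le_of_le_ofReal (by norm_num : (0:ℝ) ≤ 1) (by simpa using hS1)]

lemma cutDist_nonneg {f g : ℝ → ℝ → ℝ} (hf : IsGraphon f) (hg : IsGraphon g) :
    0 ≤ cutDist f g :=
  le_csSup (cutSet_bddAbove hf hg) (zero_mem_cutSet f g)

lemma abs_le_cutDist {f g : ℝ → ℝ → ℝ} (hf : IsGraphon f) (hg : IsGraphon g)
    {S T : Set ℝ} (hS : MeasurableSet S) (hT : MeasurableSet T) (hSsub : S ⊆ I01)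
    (hTsub : T ⊆ I01) :
    |∫ x in S, ∫ y in T, (f x y - g x y)| ≤ cutDist f g :=
  le_csSup (cutSet_bddAbove hf hg) ⟨S, T, hS, hT, hSsub, hTsub, rfl⟩

lemma integrable_of_bounded_meas {α : Type*} [MeasurableSpace α] {μ : Measure α}
    [IsFiniteMeasure μ] {F : α → ℝ} (hm : AEStronglyMeasurable F μ)
    (hb : ∀ x, |F x| ≤ 1) : Integrable F μ :=
  Integrable.mono' (integrable_const 1) hm
    (Filter.Eventually.of_forall fun x => by rw [Real.norm_eq_abs]; exact hb x)

def nu01 : Measure ℝ := volume.restrict (Set.Ioo 0 1)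
instance : IsProbabilityMeasure nu01 := by
  constructor; simp [nu01, Measure.restrict_apply, Real.volume_Ioo]

lemma layer_integral {a : ℝ} (ha : a ∈ Set.Icc (0:ℝ) 1) :
    ∫ s, (Set.Iio a).indicator (fun _ => (1:ℝ)) s ∂nu01 = a := by
  rw [integral_indicator measurableSet_Iio]
  simp only [integral_const, smul_eq_mul, mul_one]
  rw [nu01, Measure.restrict_restrict measurableSet_Iio]
  have : Set.Iio a ∩ Set.Ioo 0 1 = Set.Ioo 0 a := by
    ext x
    simp only [Set.mem_inter_iff, Set.mem_Iio, Set.mem_Ioo]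
    constructor
    · rintro ⟨h1, h2, h3⟩; exact ⟨h2, h1⟩
    · rintro ⟨h1, h2⟩; exact ⟨h2, h1, lt_of_lt_of_le h2 ha.2⟩
  rw [Measure.real, Measure.restrict_apply_univ, this, Real.volume_Ioo]
  simp [ENNReal.toReal_ofReal ha.1]

/-- The key cut-norm bound for [0,1]-valued test functions. -/
lemma cut_bound {f g : ℝ → ℝ → ℝ} (hf : IsGraphon f) (hg : IsGraphon g)
    {u v : ℝ → ℝ} (hu : Measurable u) (hv : Measurable v)
    (hu01 : ∀ x, u x ∈ Set.Icc (0:ℝ) 1) (hv01 : ∀ x, v x ∈ Set.Icc (0:ℝ) 1) :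
    |∫ x, ∫ y, u x * v y * (f x y - g x y) ∂mu01 ∂mu01| ≤ cutDist f g := by
  set F : ℝ → ℝ → ℝ := fun x y => f x y - g x y with hF
  have hFm : Measurable (Function.uncurry F) := hf.1.sub hg.1
  have hFb : ∀ x y, |F x y| ≤ 1 := by
    intro x y
    have h1 := hf.2.2 x y; have h2 := hg.2.2 x y
    simp only [Set.mem_Icc] at h1 h2
    have hfx : F x y = f x y - g x y := rfl
    rw [hfx, abs_le]; constructor <;> linarith
  set G : (ℝ × ℝ) → (ℝ × ℝ) → ℝ := fun z w =>
    ((Set.Iio (u w.1)).indicator (fun _ => (1:ℝ)) z.1) *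
    (((Set.Iio (v w.2)).indicator (fun _ => (1:ℝ)) z.2) * F w.1 w.2) with hG
  have hGeq : Function.uncurry G = fun p : (ℝ × ℝ) × (ℝ × ℝ) =>
      (if p.1.1 < u p.2.1 then (1:ℝ) else 0) *
      ((if p.1.2 < v p.2.2 then (1:ℝ) else 0) * F p.2.1 p.2.2) := by
    ext p
    simp [hG, Function.uncurry, Set.indicator_apply]
  have hGm : Measurable (Function.uncurry G) := by
    rw [hGeq]
    apply Measurable.mul
    · exact Measurable.ite (measurableSet_lt measurable_fst.fst (hu.comp measurable_snd.fst))
        measurable_const measurable_const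
    · apply Measurable.mul
      · exact Measurable.ite (measurableSet_lt measurable_fst.snd (hv.comp measurable_snd.snd))
          measurable_const measurable_const
      · exact hFm.comp measurable_snd
  have hGb : ∀ z w, |G z w| ≤ 1 := by
    intro z w
    rw [hG, abs_mul, abs_mul]
    have e1 : |(Set.Iio (u w.1)).indicator (fun _ => (1:ℝ)) z.1| ≤ 1 := by
      by_cases h : z.1 ∈ Set.Iio (u w.1) <;> simp [Set.indicator_apply, h]
    have e2 : |(Set.Iio (v w.2)).indicator (fun _ => (1:ℝ)) z.2| ≤ 1 := by
      by_cases h : z.2 ∈ Set.Iio (v w.2) <;> simp [Set.indicator_apply, h]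
    exact mul_le_one₀ e1 (by positivity)
      (mul_le_one₀ e2 (abs_nonneg _) (hFb w.1 w.2))
  have hGint : Integrable (Function.uncurry G) ((nu01.prod nu01).prod (mu01.prod mu01)) :=
    integrable_of_bounded_meas hGm.aestronglyMeasurable (fun p => hGb p.1 p.2)
  have step1 : ∀ w : ℝ × ℝ, u w.1 * v w.2 * F w.1 w.2 = ∫ z, G z w ∂(nu01.prod nu01) := by
    intro w
    have := integral_prod_mul (μ := nu01) (ν := nu01)
      (fun s => (Set.Iio (u w.1)).indicator (fun _ => (1:ℝ)) s)
      (fun t => (Set.Iio (v w.2)).indicator (fun _ => (1:ℝ)) t * F w.1 w.2)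
    rw [hG]
    simp only
    rw [this, layer_integral (hu01 w.1), integral_mul_const, layer_integral (hv01 w.2)]
    ring
  have hmain_m : Measurable (fun w : ℝ × ℝ => u w.1 * v w.2 * F w.1 w.2) :=
    ((hu.comp measurable_fst).mul (hv.comp measurable_snd)).mul hFm
  have hmain_int : Integrable (fun w : ℝ × ℝ => u w.1 * v w.2 * F w.1 w.2) (mu01.prod mu01) := by
    apply integrable_of_bounded_meas hmain_m.aestronglyMeasurable
    intro w
    rw [abs_mul, abs_mul]
    have e1 : |u w.1| ≤ 1 := by
      have := hu01 w.1; simp only [Set.mem_Icc] at this; rw [abs_le]; constructor <;> linarith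
    have e2 : |v w.2| ≤ 1 := by
      have := hv01 w.2; simp only [Set.mem_Icc] at this; rw [abs_le]; constructor <;> linarith
    exact mul_le_one₀ (mul_le_one₀ e1 (abs_nonneg _) e2) (abs_nonneg _) (hFb w.1 w.2)
  have step2 : ∫ x, ∫ y, u x * v y * (f x y - g x y) ∂mu01 ∂mu01
      = ∫ w : ℝ × ℝ, u w.1 * v w.2 * F w.1 w.2 ∂(mu01.prod mu01) :=
    (integral_prod _ hmain_int).symm
  have step3 : ∫ w : ℝ × ℝ, u w.1 * v w.2 * F w.1 w.2 ∂(mu01.prod mu01)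
      = ∫ z : ℝ × ℝ, ∫ w : ℝ × ℝ, G z w ∂(mu01.prod mu01) ∂(nu01.prod nu01) := by
    have h0 : ∫ w : ℝ × ℝ, u w.1 * v w.2 * F w.1 w.2 ∂(mu01.prod mu01)
        = ∫ w : ℝ × ℝ, ∫ z : ℝ × ℝ, G z w ∂(nu01.prod nu01) ∂(mu01.prod mu01) := by
      congr 1; ext w; exact step1 w
    rw [h0]
    exact integral_integral_swap hGint.swap
  have inner_bound : ∀ z : ℝ × ℝ, |∫ w : ℝ × ℝ, G z w ∂(mu01.prod mu01)| ≤ cutDist f g := by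
    intro z
    have huset : MeasurableSet {x : ℝ | z.1 < u x} := measurableSet_lt measurable_const hu
    have hvset : MeasurableSet {y : ℝ | z.2 < v y} := measurableSet_lt measurable_const hv
    set S : Set ℝ := {x | z.1 < u x} ∩ I01 with hSdef
    set T : Set ℝ := {y | z.2 < v y} ∩ I01 with hTdef
    have hSm : MeasurableSet S := huset.inter measurableSet_I01
    have hTm : MeasurableSet T := hvset.inter measurableSet_I01
    have hGz_int : Integrable (fun w : ℝ × ℝ => G z w) (mu01.prod mu01) :=
      integrable_of_bounded_meas (hGm.of_uncurry_left).aestronglyMeasurable (fun w => hGb z w)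
    have expand : ∫ w : ℝ × ℝ, G z w ∂(mu01.prod mu01)
        = ∫ x in S, ∫ y in T, (f x y - g x y) := by
      rw [integral_prod _ hGz_int]
      have e1 : ∀ x, ∫ y, G z (x, y) ∂mu01
          = (Set.Iio (u x)).indicator (fun _ => (1:ℝ)) z.1 *
            ∫ y in {y | z.2 < v y}, F x y ∂mu01 := by
        intro x
        rw [hG]
        simp only
        rw [integral_const_mul]
        congr 1
        have hb : ∀ y, (Set.Iio (v y)).indicator (fun _ => (1:ℝ)) z.2 * F x y
            = {y | z.2 < v y}.indicator (fun y => F x y) y := by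
          intro y
          by_cases h : z.2 < v y <;> simp [Set.indicator_apply, Set.mem_Iio, h]
        simp_rw [hb]
        exact integral_indicator hvset
      simp_rw [e1]
      have e2 : ∀ x, (Set.Iio (u x)).indicator (fun _ => (1:ℝ)) z.1 *
          ∫ y in {y | z.2 < v y}, F x y ∂mu01
          = {x | z.1 < u x}.indicator (fun x => ∫ y in {y | z.2 < v y}, F x y ∂mu01) x := by
        intro x
        by_cases h : z.1 < u x <;> simp [Set.indicator_apply, Set.mem_Iio, h]
      simp_rw [e2]
      rw [integral_indicator huset]
      rw [mu01, Measure.restrict_restrict huset, ← hSdef]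
      apply setIntegral_congr_fun hSm
      intro x _
      rw [Measure.restrict_restrict hvset, ← hTdef]
    rw [expand]
    exact abs_le_cutDist hf hg hSm hTm Set.inter_subset_right Set.inter_subset_right
  rw [step2, step3]
  have hb := @norm_integral_le_of_norm_le_const (ℝ × ℝ) ℝ _ _ _ (nu01.prod nu01) (by infer_instance)
    (fun z => ∫ w : ℝ × ℝ, G z w ∂(mu01.prod mu01)) (cutDist f g)
    (Filter.Eventually.of_forall fun z => by rw [Real.norm_eq_abs]; exact inner_bound z)
  rw [Real.norm_eq_abs] at hb
  simpa using hb

lemma edge_term_bound {n : ℕ} {f g : ℝ → ℝ → ℝ} (hf : IsGraphon f) (hg : IsGraphon g)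
    (E' : Finset (Fin n × Fin n)) (h : Fin n × Fin n → ℝ → ℝ → ℝ)
    (hh : ∀ q, h q = f ∨ h q = g) (i j : Fin n) (hij : i ≠ j)
    (hE' : ∀ q ∈ E', ¬((q.1 = i ∨ q.2 = i) ∧ (q.1 = j ∨ q.2 = j))) :
    |∫ x, (∏ q ∈ E', h q (x q.1) (x q.2)) * (f (x i) (x j) - g (x i) (x j))
        ∂(Measure.pi fun _ : Fin n => mu01)|
      ≤ cutDist f g := by
  classical
  have hhm : ∀ q, Measurable (Function.uncurry (h q)) := by
    intro q; rcases hh q with hq | hq <;> rw [hq]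
    exacts [hf.1, hg.1]
  have hh01 : ∀ q a b, h q a b ∈ Set.Icc (0:ℝ) 1 := by
    intro q a b; rcases hh q with hq | hq <;> rw [hq]
    exacts [hf.2.2 a b, hg.2.2 a b]
  have hFb : ∀ a b, |f a b - g a b| ≤ 1 := by
    intro a b
    have h1 := hf.2.2 a b; have h2 := hg.2.2 a b
    simp only [Set.mem_Icc] at h1 h2
    rw [abs_le]; constructor <;> linarith
  set Φ : (Fin n → ℝ) → ℝ := fun x =>
    (∏ q ∈ E', h q (x q.1) (x q.2)) * (f (x i) (x j) - g (x i) (x j)) with hΦdef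
  have hΦm : Measurable Φ := by
    apply Measurable.mul
    · apply Finset.measurable_prod E'
      intro q _
      have h2 : Measurable (fun a : Fin n → ℝ => (a q.1, a q.2)) :=
        (measurable_pi_apply q.1).prodMk (measurable_pi_apply q.2)
      exact (hhm q).comp h2
    · have h2 : Measurable (fun a : Fin n → ℝ => (a i, a j)) :=
        (measurable_pi_apply i).prodMk (measurable_pi_apply j)
      exact (hf.1.sub hg.1).comp h2
  have hprod01 : ∀ x : Fin n → ℝ, (∏ q ∈ E', h q (x q.1) (x q.2)) ∈ Set.Icc (0:ℝ) 1 := by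
    intro x
    constructor
    · exact Finset.prod_nonneg fun q _ => (hh01 q _ _).1
    · exact Finset.prod_le_one (fun q _ => (hh01 q _ _).1) (fun q _ => (hh01 q _ _).2)
  have hΦb : ∀ x, |Φ x| ≤ 1 := by
    intro x
    rw [hΦdef, abs_mul]
    have h1 := hprod01 x
    simp only [Set.mem_Icc] at h1
    exact mul_le_one₀ (abs_le.2 ⟨by linarith, h1.2⟩) (abs_nonneg _) (hFb _ _)
  set P : Fin n → Prop := fun k => k ≠ i ∧ k ≠ j with hPdef
  have hiJ : ¬ P i := by simp [hPdef]
  have hjJ : ¬ P j := by simp [hPdef]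
  set me1 := MeasurableEquiv.piEquivPiSubtypeProd (fun _ : Fin n => ℝ) P with hme1
  have mp1 := measurePreserving_piEquivPiSubtypeProd (fun _ : Fin n => mu01) P
  set e2 : Fin 2 ≃ {k : Fin n // ¬ P k} :=
    { toFun := fun m => if m = 0 then ⟨i, hiJ⟩ else ⟨j, hjJ⟩
      invFun := fun k => if k.1 = i then 0 else 1
      left_inv := by
        intro m
        fin_cases m
        · simp
        · simp [hij.symm]
      right_inv := by
        rintro ⟨k, hk⟩
        simp only [hPdef, not_and_or, not_ne_iff] at hk
        rcases hk with rfl | rfl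
        · simp
        · simp [hij.symm] } with he2
  set me4 : (ℝ × ℝ) ≃ᵐ ({k : Fin n // ¬ P k} → ℝ) :=
    (MeasurableEquiv.finTwoArrow).symm.trans
      (MeasurableEquiv.piCongrLeft (fun _ => ℝ) e2) with hme4
  have mp4 : MeasurePreserving me4 (mu01.prod mu01)
      (Measure.pi fun _ : {k : Fin n // ¬ P k} => mu01) := by
    have c1 := measurePreserving_piCongrLeft (fun _ : {k : Fin n // ¬ P k} => mu01) e2
    have c2 := (measurePreserving_finTwoArrow mu01).symm MeasurableEquiv.finTwoArrow
    have := c1.comp c2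
    rw [hme4, MeasurableEquiv.coe_trans]
    exact this
  set X : ({k : Fin n // P k} → ℝ) → ℝ → ℝ → (Fin n → ℝ) :=
    fun b s t k => if hk : P k then b ⟨k, hk⟩ else if k = i then s else t with hXdef
  have hXi : ∀ b s t, X b s t i = s := by
    intro b s t
    show (if hk : P i then b ⟨i, hk⟩ else if i = i then s else t) = s
    rw [dif_neg hiJ, if_pos rfl]
  have hXj : ∀ b s t, X b s t j = t := by
    intro b s t
    show (if hk : P j then b ⟨j, hk⟩ else if j = i then s else t) = t
    rw [dif_neg hjJ, if_neg hij.symm]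
  have hXP : ∀ b s t k (hk : P k), X b s t k = b ⟨k, hk⟩ := by
    intro b s t k hk
    show (if hk : P k then b ⟨k, hk⟩ else if k = i then s else t) = b ⟨k, hk⟩
    rw [dif_pos hk]
  -- the key evaluation
  have hX : ∀ b s t, me1.symm (b, me4 (s, t)) = X b s t := by
    intro b s t
    funext k
    rw [hme1]
    have : (MeasurableEquiv.piEquivPiSubtypeProd (fun _ : Fin n => ℝ) P).symm (b, me4 (s, t)) k
        = if hk : P k then b ⟨k, hk⟩ else (me4 (s, t)) ⟨k, hk⟩ := by
      exact Equiv.piEquivPiSubtypeProd_symm_apply P (fun _ => ℝ) (b, me4 (s,t)) k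
    rw [this]
    by_cases hk : P k
    · rw [dif_pos hk, hXP b s t k hk]
    · rw [dif_neg hk]
      have hfin : ∀ m : Fin 2, (me4 (s, t)) (e2 m) = ![s, t] m := by
        intro m
        rw [hme4]
        simp only [MeasurableEquiv.trans_apply, MeasurableEquiv.coe_piCongrLeft]
        rw [Equiv.piCongrLeft_apply_apply]
        fin_cases m <;> simp [MeasurableEquiv.finTwoArrow]
      have hkk : ¬(k ≠ i ∧ k ≠ j) := hk
      have hk2 : k = i ∨ k = j := by
        rcases not_and_or.1 hkk with hk' | hk'
        · exact Or.inl (not_ne_iff.1 hk')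
        · exact Or.inr (not_ne_iff.1 hk')
      rcases hk2 with hk' | hk'
      · subst hk'
        rw [hXi]
        have h0 : (⟨k, hk⟩ : {k : Fin n // ¬ P k}) = e2 0 := by
          apply Subtype.ext
          rw [he2]
          simp
        rw [h0, hfin 0]
        simp
      · subst hk'
        rw [hXj]
        have h1 : (⟨k, hk⟩ : {k : Fin n // ¬ P k}) = e2 1 := by
          apply Subtype.ext
          rw [he2]
          simp
        rw [h1, hfin 1]
        simp
  -- abbreviations for measures
  have hint1 : Integrable (fun w => Φ (me1.symm w))
      ((Measure.pi fun _ : {k : Fin n // P k} => mu01).prod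
        (Measure.pi fun _ : {k : Fin n // ¬ P k} => mu01)) :=
    integrable_of_bounded_meas (hΦm.comp me1.symm.measurable).aestronglyMeasurable
      (fun w => hΦb _)
  have key1 : ∫ x, Φ x ∂(Measure.pi fun _ : Fin n => mu01)
      = ∫ w, Φ (me1.symm w) ∂((Measure.pi fun _ : {k : Fin n // P k} => mu01).prod
          (Measure.pi fun _ : {k : Fin n // ¬ P k} => mu01)) := by
    rw [← mp1.integral_comp (MeasurableEquiv.measurableEmbedding _) (fun w => Φ (me1.symm w))]
    congr 1
    funext x
    rw [hme1]
    simp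
  have key2 : ∫ w, Φ (me1.symm w) ∂((Measure.pi fun _ : {k : Fin n // P k} => mu01).prod
          (Measure.pi fun _ : {k : Fin n // ¬ P k} => mu01))
      = ∫ b, ∫ a, Φ (me1.symm (b, a)) ∂(Measure.pi fun _ : {k : Fin n // ¬ P k} => mu01)
          ∂(Measure.pi fun _ : {k : Fin n // P k} => mu01) :=
    integral_prod _ hint1
  -- for each fixed rest-coordinate b, bound the inner integral
  have hinner : ∀ b : {k : Fin n // P k} → ℝ,
      |∫ a, Φ (me1.symm (b, a)) ∂(Measure.pi fun _ : {k : Fin n // ¬ P k} => mu01)|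
        ≤ cutDist f g := by
    intro b
    have key3 : ∫ a, Φ (me1.symm (b, a)) ∂(Measure.pi fun _ : {k : Fin n // ¬ P k} => mu01)
        = ∫ z, Φ (me1.symm (b, me4 z)) ∂(mu01.prod mu01) :=
      (mp4.integral_comp me4.measurableEmbedding (fun a => Φ (me1.symm (b, a)))).symm
    have m1 : Measurable (fun z : ℝ × ℝ => (b, me4 z)) :=
      measurable_const.prodMk me4.measurable
    have hint2 : Integrable (fun z : ℝ × ℝ => Φ (me1.symm (b, me4 z))) (mu01.prod mu01) :=
      integrable_of_bounded_meas
        ((hΦm.comp (me1.symm.measurable.comp m1)).aestronglyMeasurable) (fun z => hΦb _)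
    have key4 : ∫ z, Φ (me1.symm (b, me4 z)) ∂(mu01.prod mu01)
        = ∫ s, ∫ t, Φ (X b s t) ∂mu01 ∂mu01 := by
      rw [integral_prod _ hint2]
      congr 1
      funext s
      congr 1
      funext t
      rw [hX]
    -- coordinate invariance
    have hXcoord_i : ∀ s t t' (k : Fin n), k ≠ j → X b s t k = X b s t' k := by
      intro s t t' k hkj
      show (if hk : P k then b ⟨k, hk⟩ else if k = i then s else t)
        = (if hk : P k then b ⟨k, hk⟩ else if k = i then s else t')
      by_cases hk : P k
      · rw [dif_pos hk, dif_pos hk]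
      · rw [dif_neg hk, dif_neg hk]
        by_cases hki : k = i
        · rw [if_pos hki, if_pos hki]
        · exact absurd ⟨hki, hkj⟩ hk
    have hXcoord_j : ∀ s s' t (k : Fin n), k ≠ i → X b s t k = X b s' t k := by
      intro s s' t k hki
      show (if hk : P k then b ⟨k, hk⟩ else if k = i then s else t)
        = (if hk : P k then b ⟨k, hk⟩ else if k = i then s' else t)
      by_cases hk : P k
      · rw [dif_pos hk, dif_pos hk]
      · rw [dif_neg hk, dif_neg hk, if_neg hki, if_neg hki]
    -- split the product
    set A : Finset (Fin n × Fin n) := E'.filter (fun q => q.1 = i ∨ q.2 = i) with hA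
    set Brest : Finset (Fin n × Fin n) := E'.filter (fun q => ¬(q.1 = i ∨ q.2 = i)) with hBrest
    set B : Finset (Fin n × Fin n) := Brest.filter (fun q => q.1 = j ∨ q.2 = j) with hB
    set C : Finset (Fin n × Fin n) := Brest.filter (fun q => ¬(q.1 = j ∨ q.2 = j)) with hC
    set u : ℝ → ℝ := fun s => ∏ q ∈ A, h q (X b s 0 q.1) (X b s 0 q.2) with hu
    set v : ℝ → ℝ := fun t => (∏ q ∈ B, h q (X b 0 t q.1) (X b 0 t q.2)) *
      (∏ q ∈ C, h q (X b 0 0 q.1) (X b 0 0 q.2)) with hv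
    have hAnotj : ∀ q ∈ A, q.1 ≠ j ∧ q.2 ≠ j := by
      intro q hq
      rw [hA, Finset.mem_filter] at hq
      have := hE' q hq.1
      constructor
      · intro hc; exact this ⟨hq.2, Or.inl hc⟩
      · intro hc; exact this ⟨hq.2, Or.inr hc⟩
    have hBnoti : ∀ q ∈ B, q.1 ≠ i ∧ q.2 ≠ i := by
      intro q hq
      rw [hB, Finset.mem_filter, hBrest, Finset.mem_filter] at hq
      have := hq.1.2
      push_neg at this
      exact this
    have hCnot : ∀ q ∈ C, (q.1 ≠ i ∧ q.2 ≠ i) ∧ (q.1 ≠ j ∧ q.2 ≠ j) := by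
      intro q hq
      rw [hC, Finset.mem_filter, hBrest, Finset.mem_filter] at hq
      have h1 := hq.1.2
      have h2 := hq.2
      push_neg at h1 h2
      exact ⟨h1, h2⟩
    have prodeq : ∀ s t, (∏ q ∈ E', h q (X b s t q.1) (X b s t q.2)) = u s * v t := by
      intro s t
      rw [← Finset.prod_filter_mul_prod_filter_not E' (fun q => q.1 = i ∨ q.2 = i)
        (fun q => h q (X b s t q.1) (X b s t q.2)), ← hA, ← hBrest]
      rw [← Finset.prod_filter_mul_prod_filter_not Brest (fun q => q.1 = j ∨ q.2 = j)
        (fun q => h q (X b s t q.1) (X b s t q.2)), ← hB, ← hC]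
      have pA : ∏ q ∈ A, h q (X b s t q.1) (X b s t q.2) = u s := by
        rw [hu]
        apply Finset.prod_congr rfl
        intro q hq
        rw [hXcoord_i s t 0 q.1 (hAnotj q hq).1, hXcoord_i s t 0 q.2 (hAnotj q hq).2]
      have pB : ∏ q ∈ B, h q (X b s t q.1) (X b s t q.2)
          = ∏ q ∈ B, h q (X b 0 t q.1) (X b 0 t q.2) := by
        apply Finset.prod_congr rfl
        intro q hq
        rw [hXcoord_j s 0 t q.1 (hBnoti q hq).1, hXcoord_j s 0 t q.2 (hBnoti q hq).2]
      have pC : ∏ q ∈ C, h q (X b s t q.1) (X b s t q.2)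
          = ∏ q ∈ C, h q (X b 0 0 q.1) (X b 0 0 q.2) := by
        apply Finset.prod_congr rfl
        intro q hq
        rw [hXcoord_j s 0 t q.1 (hCnot q hq).1.1, hXcoord_j s 0 t q.2 (hCnot q hq).1.2,
          hXcoord_i 0 t 0 q.1 (hCnot q hq).2.1, hXcoord_i 0 t 0 q.2 (hCnot q hq).2.2]
      rw [pA, pB, pC, hv]
    have hu01 : ∀ s, u s ∈ Set.Icc (0:ℝ) 1 := by
      intro s
      rw [hu]
      constructor
      · exact Finset.prod_nonneg fun q _ => (hh01 q _ _).1
      · exact Finset.prod_le_one (fun q _ => (hh01 q _ _).1) (fun q _ => (hh01 q _ _).2)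
    have hv01 : ∀ t, v t ∈ Set.Icc (0:ℝ) 1 := by
      intro t
      rw [hv]
      have b1 : (∏ q ∈ B, h q (X b 0 t q.1) (X b 0 t q.2)) ∈ Set.Icc (0:ℝ) 1 :=
        ⟨Finset.prod_nonneg fun q _ => (hh01 q _ _).1,
         Finset.prod_le_one (fun q _ => (hh01 q _ _).1) (fun q _ => (hh01 q _ _).2)⟩
      have c1 : (∏ q ∈ C, h q (X b 0 0 q.1) (X b 0 0 q.2)) ∈ Set.Icc (0:ℝ) 1 :=
        ⟨Finset.prod_nonneg fun q _ => (hh01 q _ _).1,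
         Finset.prod_le_one (fun q _ => (hh01 q _ _).1) (fun q _ => (hh01 q _ _).2)⟩
      exact ⟨mul_nonneg b1.1 c1.1, mul_le_one₀ b1.2 c1.1 c1.2⟩
    have hXm_s : ∀ (t : ℝ) (k : Fin n), Measurable (fun s => X b s t k) := by
      intro t k
      have : (fun s => X b s t k)
          = fun s => if hk : P k then b ⟨k, hk⟩ else if k = i then s else t := rfl
      rw [this]
      by_cases hk : P k
      · simp only [dif_pos hk]; exact measurable_const
      · simp only [dif_neg hk]
        by_cases hki : k = i
        · simp only [if_pos hki]; exact measurable_id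
        · simp only [if_neg hki]; exact measurable_const
    have hXm_t : ∀ (s : ℝ) (k : Fin n), Measurable (fun t => X b s t k) := by
      intro s k
      have : (fun t => X b s t k)
          = fun t => if hk : P k then b ⟨k, hk⟩ else if k = i then s else t := rfl
      rw [this]
      by_cases hk : P k
      · simp only [dif_pos hk]; exact measurable_const
      · simp only [dif_neg hk]
        by_cases hki : k = i
        · simp only [if_pos hki]; exact measurable_const
        · simp only [if_neg hki]; exact measurable_id
    have hum : Measurable u := by
      rw [hu]
      apply Finset.measurable_prod
      intro q _
      have h2 : Measurable (fun s : ℝ => (X b s 0 q.1, X b s 0 q.2)) :=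
        (hXm_s 0 q.1).prodMk (hXm_s 0 q.2)
      exact (hhm q).comp h2
    have hvm : Measurable v := by
      rw [hv]
      apply Measurable.mul _ measurable_const
      apply Finset.measurable_prod
      intro q _
      have h2 : Measurable (fun t : ℝ => (X b 0 t q.1, X b 0 t q.2)) :=
        (hXm_t 0 q.1).prodMk (hXm_t 0 q.2)
      exact (hhm q).comp h2
    have hrw : ∀ s t : ℝ, Φ (X b s t) = u s * v t * (f s t - g s t) := by
      intro s t
      show (∏ q ∈ E', h q (X b s t q.1) (X b s t q.2)) *
        (f (X b s t i) (X b s t j) - g (X b s t i) (X b s t j)) = _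
      rw [hXi, hXj, prodeq]
    rw [key3, key4]
    have : (∫ s, ∫ t, Φ (X b s t) ∂mu01 ∂mu01)
        = ∫ s, ∫ t, u s * v t * (f s t - g s t) ∂mu01 ∂mu01 := by
      congr 1; funext s; congr 1; funext t; rw [hrw]
    rw [this]
    exact cut_bound hf hg hum hvm hu01 hv01
  -- conclude
  have goal_eq : (∫ x, (∏ q ∈ E', h q (x q.1) (x q.2)) * (f (x i) (x j) - g (x i) (x j))
      ∂(Measure.pi fun _ : Fin n => mu01)) = ∫ x, Φ x ∂(Measure.pi fun _ : Fin n => mu01) := rfl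
  rw [goal_eq, key1, key2]
  have hb := @norm_integral_le_of_norm_le_const _ ℝ _ _ _
    (Measure.pi fun _ : {k : Fin n // P k} => mu01) (by infer_instance)
    (fun b => ∫ a, Φ (me1.symm (b, a)) ∂(Measure.pi fun _ : {k : Fin n // ¬ P k} => mu01))
    (cutDist f g)
    (Filter.Eventually.of_forall fun b => by rw [Real.norm_eq_abs]; exact hinner b)
  rw [Real.norm_eq_abs] at hb
  simpa using hb

lemma volume_restrict_pi (n : ℕ) :
    (volume : Measure (Fin n → ℝ)).restrict (Set.univ.pi fun _ => I01)
      = Measure.pi (fun _ : Fin n => mu01) := by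
  refine (Measure.pi_eq fun s hs => ?_).symm
  rw [Measure.restrict_apply (MeasurableSet.univ_pi hs)]
  have : (Set.univ.pi s) ∩ (Set.univ.pi fun _ => I01) = Set.univ.pi (fun i => s i ∩ I01) :=
    (Set.pi_inter_distrib).symm
  rw [this, volume_pi, Measure.pi_pi]
  apply Finset.prod_congr rfl
  intro k _
  rw [mu01, Measure.restrict_apply (hs k)]

theorem homDensity_lipschitz_cutDist {n : ℕ} (H : SimpleGraph (Fin n)) [DecidableRel H.Adj]
    (f g : ℝ → ℝ → ℝ) (hf : IsGraphon f) (hg : IsGraphon g) :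
    |homDensity H f - homDensity H g| ≤ ((edgePairs H).card : ℝ) * cutDist f g := by
  classical
  set key : (Fin n × Fin n) → Fin (n * n) := fun q => finProdFinEquiv q with hkey
  have hkeyinj : Function.Injective key := finProdFinEquiv.injective
  set E := edgePairs H with hE
  set piM : Measure (Fin n → ℝ) := Measure.pi (fun _ : Fin n => mu01) with hpiM
  have hmem : ∀ q ∈ E, q.1 < q.2 ∧ H.Adj q.1 q.2 := by
    intro q hq
    rw [hE, edgePairs, Finset.mem_filter] at hq
    exact hq.2
  -- measurability helpers
  have measf : ∀ (w : ℝ → ℝ → ℝ), Measurable (Function.uncurry w) →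
      ∀ (q : Fin n × Fin n), Measurable (fun x : Fin n → ℝ => w (x q.1) (x q.2)) := by
    intro w hw q
    have h2 : Measurable (fun a : Fin n → ℝ => (a q.1, a q.2)) :=
      (measurable_pi_apply q.1).prodMk (measurable_pi_apply q.2)
    exact hw.comp h2
  have prodmeas : ∀ (w : ℝ → ℝ → ℝ), Measurable (Function.uncurry w) → ∀ s : Finset (Fin n × Fin n),
      Measurable (fun x : Fin n → ℝ => ∏ q ∈ s, w (x q.1) (x q.2)) := by
    intro w hw s
    exact Finset.measurable_prod s fun q _ => measf w hw q
  have prod01 : ∀ (w : ℝ → ℝ → ℝ), (∀ a b, w a b ∈ Set.Icc (0:ℝ) 1) →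
      ∀ (s : Finset (Fin n × Fin n)) (x : Fin n → ℝ),
      (∏ q ∈ s, w (x q.1) (x q.2)) ∈ Set.Icc (0:ℝ) 1 := by
    intro w hw s x
    exact ⟨Finset.prod_nonneg fun q _ => (hw _ _).1,
      Finset.prod_le_one (fun q _ => (hw _ _).1) (fun q _ => (hw _ _).2)⟩
  -- rewrite homDensity via the product measure
  have hhf : homDensity H f = ∫ x, ∏ q ∈ E, f (x q.1) (x q.2) ∂piM := by
    rw [homDensity, volume_restrict_pi n, hpiM, hE]
  have hhg : homDensity H g = ∫ x, ∏ q ∈ E, g (x q.1) (x q.2) ∂piM := by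
    rw [homDensity, volume_restrict_pi n, hpiM, hE]
  have hfint : Integrable (fun x : Fin n → ℝ => ∏ q ∈ E, f (x q.1) (x q.2)) piM :=
    integrable_of_bounded_meas (prodmeas f hf.1 E).aestronglyMeasurable
      (fun x => by
        have := prod01 f hf.2.2 E x
        rw [abs_le]; exact ⟨by linarith [this.1], this.2⟩)
  have hgint : Integrable (fun x : Fin n → ℝ => ∏ q ∈ E, g (x q.1) (x q.2)) piM :=
    integrable_of_bounded_meas (prodmeas g hg.1 E).aestronglyMeasurable
      (fun x => by
        have := prod01 g hg.2.2 E x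
        rw [abs_le]; exact ⟨by linarith [this.1], this.2⟩)
  -- the per-edge terms
  set T : (Fin n × Fin n) → ℝ := fun p => ∫ x,
      (∏ q ∈ E.filter (fun q => key q < key p), f (x q.1) (x q.2)) *
      (f (x p.1) (x p.2) - g (x p.1) (x p.2)) *
      (∏ q ∈ E.filter (fun q => key p < key q), g (x q.1) (x q.2)) ∂piM with hT
  have hterm_meas : ∀ p : Fin n × Fin n, Measurable (fun x : Fin n → ℝ =>
      (∏ q ∈ E.filter (fun q => key q < key p), f (x q.1) (x q.2)) *
      (f (x p.1) (x p.2) - g (x p.1) (x p.2)) *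
      (∏ q ∈ E.filter (fun q => key p < key q), g (x q.1) (x q.2))) := by
    intro p
    exact ((prodmeas f hf.1 _).mul ((measf f hf.1 p).sub (measf g hg.1 p))).mul
      (prodmeas g hg.1 _)
  have hterm_bd : ∀ (p : Fin n × Fin n) (x : Fin n → ℝ),
      |(∏ q ∈ E.filter (fun q => key q < key p), f (x q.1) (x q.2)) *
      (f (x p.1) (x p.2) - g (x p.1) (x p.2)) *
      (∏ q ∈ E.filter (fun q => key p < key q), g (x q.1) (x q.2))| ≤ 1 := by
    intro p x
    have h1 := prod01 f hf.2.2 (E.filter (fun q => key q < key p)) x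
    have h2 := prod01 g hg.2.2 (E.filter (fun q => key p < key q)) x
    have h3 : |f (x p.1) (x p.2) - g (x p.1) (x p.2)| ≤ 1 := by
      have a1 := hf.2.2 (x p.1) (x p.2); have a2 := hg.2.2 (x p.1) (x p.2)
      simp only [Set.mem_Icc] at a1 a2
      rw [abs_le]; constructor <;> linarith
    rw [abs_mul, abs_mul]
    refine mul_le_one₀ (mul_le_one₀ ?_ (abs_nonneg _) h3) (abs_nonneg _) ?_
    · rw [abs_le]; exact ⟨by linarith [h1.1], h1.2⟩
    · rw [abs_le]; exact ⟨by linarith [h2.1], h2.2⟩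
  have htelesc : homDensity H f - homDensity H g = ∑ p ∈ E, T p := by
    rw [hhf, hhg, ← integral_sub hfint hgint]
    have : ∀ x : Fin n → ℝ, (∏ q ∈ E, f (x q.1) (x q.2)) - (∏ q ∈ E, g (x q.1) (x q.2))
        = ∑ p ∈ E, (∏ q ∈ E.filter (fun q => key q < key p), f (x q.1) (x q.2)) *
          (f (x p.1) (x p.2) - g (x p.1) (x p.2)) *
          (∏ q ∈ E.filter (fun q => key p < key q), g (x q.1) (x q.2)) := by
      intro x
      exact prod_sub_prod_telescope key hkeyinj E (fun q => f (x q.1) (x q.2))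
        (fun q => g (x q.1) (x q.2))
    rw [integral_congr_ae (Filter.Eventually.of_forall this)]
    rw [integral_finset_sum E (fun p _ => integrable_of_bounded_meas
      (hterm_meas p).aestronglyMeasurable (hterm_bd p))]
  -- bound each term
  have hTp : ∀ p ∈ E, |T p| ≤ cutDist f g := by
    intro p hp
    have hp12 : p.1 < p.2 := (hmem p hp).1
    have hij : p.1 ≠ p.2 := ne_of_lt hp12
    set h : (Fin n × Fin n) → ℝ → ℝ → ℝ := fun q => if key q < key p then f else g with hh_def
    have hhval : ∀ q, (key q < key p → h q = f) ∧ (¬ key q < key p → h q = g) := by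
      intro q
      constructor
      · intro hq; show (if key q < key p then f else g) = f; rw [if_pos hq]
      · intro hq; show (if key q < key p then f else g) = g; rw [if_neg hq]
    have hh : ∀ q, h q = f ∨ h q = g := by
      intro q
      by_cases hq : key q < key p
      · exact Or.inl ((hhval q).1 hq)
      · exact Or.inr ((hhval q).2 hq)
    have hE' : ∀ q ∈ E.erase p, ¬((q.1 = p.1 ∨ q.2 = p.1) ∧ (q.1 = p.2 ∨ q.2 = p.2)) := by
      intro q hq
      have hqne : q ≠ p := Finset.ne_of_mem_erase hq
      have hqE : q ∈ E := Finset.mem_of_mem_erase hq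
      have hq12 : q.1 < q.2 := (hmem q hqE).1
      rintro ⟨h1 | h1, h2 | h2⟩
      · exact absurd (h1 ▸ h2 ▸ rfl : p.1 = p.2) hij
      · exact hqne (Prod.ext h1 h2)
      · exact absurd (h1 ▸ h2 ▸ hq12) (lt_asymm hp12)
      · exact absurd ((h1.symm.trans h2) : p.1 = p.2) hij
    -- rewrite T p in the canonical form
    have hfilter1 : E.filter (fun q => key q < key p)
        = (E.erase p).filter (fun q => key q < key p) := by
      ext q
      simp only [Finset.mem_filter, Finset.mem_erase]
      constructor
      · rintro ⟨hq, hlt⟩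
        refine ⟨⟨fun hc => ?_, hq⟩, hlt⟩
        subst hc; exact lt_irrefl _ hlt
      · rintro ⟨⟨_, hq⟩, hlt⟩; exact ⟨hq, hlt⟩
    have hfilter2 : E.filter (fun q => key p < key q)
        = (E.erase p).filter (fun q => ¬ key q < key p) := by
      ext q
      simp only [Finset.mem_filter, Finset.mem_erase]
      constructor
      · rintro ⟨hq, hlt⟩
        refine ⟨⟨fun hc => ?_, hq⟩, not_lt.2 (le_of_lt hlt)⟩
        subst hc; exact lt_irrefl _ hlt
      · rintro ⟨⟨hne, hq⟩, hnlt⟩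
        exact ⟨hq, lt_of_le_of_ne (not_lt.1 hnlt) fun hc => hne (hkeyinj hc.symm)⟩
    have hpoint : ∀ x : Fin n → ℝ,
        (∏ q ∈ E.filter (fun q => key q < key p), f (x q.1) (x q.2)) *
        (f (x p.1) (x p.2) - g (x p.1) (x p.2)) *
        (∏ q ∈ E.filter (fun q => key p < key q), g (x q.1) (x q.2))
        = (∏ q ∈ E.erase p, h q (x q.1) (x q.2)) *
          (f (x p.1) (x p.2) - g (x p.1) (x p.2)) := by
      intro x
      rw [hfilter1, hfilter2, mul_right_comm]
      congr 1
      rw [← Finset.prod_filter_mul_prod_filter_not (E.erase p) (fun q => key q < key p)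
        (fun q => h q (x q.1) (x q.2))]
      congr 1
      · apply Finset.prod_congr rfl
        intro q hq
        rw [Finset.mem_filter] at hq
        rw [(hhval q).1 hq.2]
      · apply Finset.prod_congr rfl
        intro q hq
        rw [Finset.mem_filter] at hq
        rw [(hhval q).2 hq.2]
    have : T p = ∫ x, (∏ q ∈ E.erase p, h q (x q.1) (x q.2)) *
        (f (x p.1) (x p.2) - g (x p.1) (x p.2)) ∂piM := by
      rw [hT]
      exact integral_congr_ae (Filter.Eventually.of_forall hpoint)
    rw [this, hpiM]
    exact edge_term_bound hf hg (E.erase p) h hh p.1 p.2 hij hE'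
  -- conclude
  rw [htelesc]
  calc |∑ p ∈ E, T p| ≤ ∑ p ∈ E, |T p| := Finset.abs_sum_le_sum_abs _ _
    _ ≤ ∑ _p ∈ E, cutDist f g := Finset.sum_le_sum hTp
    _ = (E.card : ℝ) * cutDist f g := by rw [Finset.sum_const, nsmul_eq_mul]
    _ = ((edgePairs H).card : ℝ) * cutDist f g := by rw [hE]
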